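/- Suppose ζₙ → ζ ≠ 0 in Wasserstein₁ on finite nonnegative measures on [0,∞) with finite first moment, and xₙ → x in [0,∞) with x < ⟨χ,ζ⟩. Then F⁻¹_{ζₙ}(xₙ) → F⁻¹_ζ(x). -/

import Mathlib

open MeasureTheory Filter

/-- `F_ζ(x) = ∫ min(y,x) dζ(y)`. -/
noncomputable def Fz (ζ : Measure ℝ) (x : ℝ) : ℝ := ∫ y, min y x ∂ζ

/-- The supremum `x*` of the support of `ζ`. -/
noncomputable def xstar (ζ : Measure ℝ) : ℝ := sInf {x : ℝ | ζ (Set.Ioi x) = 0}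

/-- The generalized inverse `F⁻¹_ζ`. -/
noncomputable def Finv (ζ : Measure ℝ) (t : ℝ) : ℝ :=
  if t < ∫ y, y ∂ζ then sInf {x : ℝ | 0 ≤ x ∧ t ≤ Fz ζ x} else xstar ζ

section aux

variable {μ : Measure ℝ}

lemma ae_nonneg' (h : μ (Set.Iio 0) = 0) : ∀ᵐ y ∂μ, 0 ≤ y := by
  rw [ae_iff]
  convert h using 2
  ext y; simp [not_le, Set.mem_Iio]

lemma min_sub_min_abs (y a b : ℝ) : |min y a - min y b| ≤ |a - b| := by
  rcases le_total y a with h1 | h1 <;> rcases le_total y b with h2 | h2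
  · simp only [min_eq_left h1, min_eq_left h2, sub_self, abs_zero]
    exact abs_nonneg (a - b)
  · rw [min_eq_left h1, min_eq_right h2, abs_of_nonneg (by linarith)]
    linarith [le_abs_self (a - b)]
  · rw [min_eq_right h1, min_eq_left h2, abs_of_nonpos (by linarith)]
    linarith [le_abs_self (b - a), abs_sub_comm a b]
  · rw [min_eq_right h1, min_eq_right h2]

lemma int_min [IsFiniteMeasure μ] (hint : Integrable id μ) (a : ℝ) :
    Integrable (fun y => min y a) μ := by
  refine Integrable.mono' (hint.abs.add (integrable_const |a|))
    ((continuous_id.min continuous_const).aestronglyMeasurable) ?_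
  filter_upwards with y
  rcases le_total y a with h | h
  · simp only [min_eq_left h, Real.norm_eq_abs, id]
    exact le_add_of_nonneg_right (abs_nonneg _)
  · simp only [min_eq_right h, Real.norm_eq_abs, id]
    exact le_add_of_nonneg_left (abs_nonneg _)

lemma Fz_mono [IsFiniteMeasure μ] (hint : Integrable id μ) {a b : ℝ} (hab : a ≤ b) :
    Fz μ a ≤ Fz μ b :=
  integral_mono (int_min hint a) (int_min hint b) fun y => min_le_min le_rfl hab

lemma Fz_lipschitz [IsFiniteMeasure μ] (hint : Integrable id μ) :
    Continuous (Fz μ) := by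
  have : LipschitzWith (μ Set.univ).toNNReal (Fz μ) := by
    refine LipschitzWith.of_dist_le_mul fun a b => ?_
    have h1 : Fz μ a - Fz μ b = ∫ y, (min y a - min y b) ∂μ :=
      (integral_sub (int_min hint a) (int_min hint b)).symm
    rw [Real.dist_eq, Real.dist_eq, h1]
    calc |∫ y, (min y a - min y b) ∂μ| ≤ ∫ y, |min y a - min y b| ∂μ := by
          simpa using norm_integral_le_integral_norm (fun y => min y a - min y b) (μ := μ)
      _ ≤ ∫ _, |a - b| ∂μ := by
          refine integral_mono ((int_min hint a).sub (int_min hint b)).abs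
            (integrable_const _) fun y => min_sub_min_abs y a b
      _ = (μ Set.univ).toReal * |a - b| := by
          rw [integral_const]; simp [smul_eq_mul, Measure.real]
      _ = ↑(μ Set.univ).toNNReal * |a - b| := rfl
  exact this.continuous

lemma Fz_tendsto_atTop [IsFiniteMeasure μ] (hpos : ∀ᵐ y ∂μ, 0 ≤ y)
    (hint : Integrable id μ) :
    Tendsto (Fz μ) atTop (nhds (∫ y, y ∂μ)) := by
  refine tendsto_integral_filter_of_dominated_convergence (fun y => |y|)
    (Eventually.of_forall fun z =>
      ((continuous_id.min continuous_const).aestronglyMeasurable)) ?_ hint.abs ?_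
  · filter_upwards [eventually_ge_atTop (0 : ℝ)] with z hz
    filter_upwards [hpos] with y hy
    rcases le_total y z with h | h
    · simp [min_eq_left h, Real.norm_eq_abs, abs_le, abs_nonneg, neg_abs_le,
        le_abs_self]
    · rw [min_eq_right h, Real.norm_eq_abs, abs_of_nonneg hz]
      exact h.trans (le_abs_self y)
  · filter_upwards with y
    refine tendsto_const_nhds.congr' ?_
    filter_upwards [eventually_ge_atTop y] with z hz
    exact (min_eq_left hz).symm

end aux

theorem stmt4 (ζn : ℕ → Measure ℝ) (ζ : Measure ℝ)
    (hfin : ∀ n, IsFiniteMeasure (ζn n)) [IsFiniteMeasure ζ] (hne : ζ ≠ 0)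
    (hsuppn : ∀ n, ζn n (Set.Iio 0) = 0) (hsupp : ζ (Set.Iio 0) = 0)
    (hintn : ∀ n, Integrable id (ζn n)) (hint : Integrable id ζ)
    (hweak : ∀ f : BoundedContinuousFunction ℝ ℝ,
      Tendsto (fun n => ∫ y, f y ∂(ζn n)) atTop (nhds (∫ y, f y ∂ζ)))
    (hmom : Tendsto (fun n => ∫ y, y ∂(ζn n)) atTop (nhds (∫ y, y ∂ζ)))
    (xn : ℕ → ℝ) (x : ℝ) (hxn : ∀ n, 0 ≤ xn n) (hx : 0 ≤ x)
    (hxconv : Tendsto xn atTop (nhds x)) (hxlt : x < ∫ y, y ∂ζ) :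
    Tendsto (fun n => Finv (ζn n) (xn n)) atTop (nhds (Finv ζ x)) := by
  have haen : ∀ n, ∀ᵐ y ∂(ζn n), 0 ≤ y := fun n => ae_nonneg' (hsuppn n)
  have hae : ∀ᵐ y ∂ζ, 0 ≤ y := ae_nonneg' hsupp
  -- pointwise convergence of Fz at nonnegative arguments
  have hFzconv : ∀ a : ℝ, 0 ≤ a →
      Tendsto (fun n => Fz (ζn n) a) atTop (nhds (Fz ζ a)) := by
    intro a ha
    have hcont : Continuous (fun y : ℝ => min (max y 0) a) :=
      (continuous_id.max continuous_const).min continuous_const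
    have hbd : ∀ y : ℝ, ‖min (max y 0) a‖ ≤ a := by
      intro y
      rw [Real.norm_eq_abs, abs_of_nonneg (le_min (le_max_right y 0) ha)]
      exact min_le_right _ _
    set g : BoundedContinuousFunction ℝ ℝ :=
      BoundedContinuousFunction.ofNormedAddCommGroup _ hcont a hbd with hg
    have hgcoe : ∀ y, g y = min (max y 0) a := fun y => rfl
    have key := hweak g
    have h1 : ∀ n, (∫ y, g y ∂(ζn n)) = Fz (ζn n) a := by
      intro n
      refine integral_congr_ae ?_
      filter_upwards [haen n] with y hy
      rw [hgcoe, max_eq_left hy]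
    have h2 : (∫ y, g y ∂ζ) = Fz ζ a := by
      refine integral_congr_ae ?_
      filter_upwards [hae] with y hy
      rw [hgcoe, max_eq_left hy]
    rw [h2] at key
    exact key.congr fun n => h1 n
  set M := ∫ y, y ∂ζ with hM
  set S : Set ℝ := {z : ℝ | 0 ≤ z ∧ x ≤ Fz ζ z} with hS
  set q := Finv ζ x with hq
  have hqS : q = sInf S := by rw [hq, Finv, if_pos hxlt]
  -- S is nonempty
  have hSne : S.Nonempty := by
    have := (Fz_tendsto_atTop hae hint).eventually (eventually_ge_nhds hxlt)
    rcases ((eventually_ge_atTop (0:ℝ)).and this).exists with ⟨z, hz0, hzx⟩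
    exact ⟨z, hz0, hzx⟩
  have hSbdd : BddBelow S := ⟨0, fun z hz => hz.1⟩
  have hSclosed : IsClosed S := by
    rw [hS]
    have : {z : ℝ | 0 ≤ z ∧ x ≤ Fz ζ z}
        = {z : ℝ | 0 ≤ z} ∩ {z : ℝ | x ≤ Fz ζ z} := rfl
    rw [this]
    exact (isClosed_le continuous_const continuous_id).inter
      (isClosed_le continuous_const (Fz_lipschitz hint))
  have hqmem : q ∈ S := hqS ▸ hSclosed.csInf_mem hSne hSbdd
  have hq0 : 0 ≤ q := hqmem.1
  have hqF : x ≤ Fz ζ q := hqmem.2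
  -- strict increase above q
  have hup : ∀ δ : ℝ, 0 < δ → x < Fz ζ (q + δ) := by
    intro δ hδ
    by_cases hq' : ζ (Set.Ioi q) = 0
    · have hle : ∀ᵐ y ∂ζ, y ≤ q := by
        rw [ae_iff]
        convert hq' using 2
        ext y; simp [not_le, Set.mem_Ioi]
      have : Fz ζ (q + δ) = M := by
        rw [Fz, hM]
        refine integral_congr_ae ?_
        filter_upwards [hle] with y hy
        exact min_eq_left (hy.trans (by linarith))
      rw [this]; exact hxlt
    · have hsub : 0 < ∫ y, (min y (q + δ) - min y q) ∂ζ := by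
        rw [integral_pos_iff_support_of_nonneg_ae
          (Eventually.of_forall fun y => sub_nonneg.2 (min_le_min le_rfl (by linarith)))
          ((int_min hint _).sub (int_min hint _))]
        refine lt_of_lt_of_le (b := ζ (Set.Ioi q)) ?_ (measure_mono ?_)
        · exact pos_iff_ne_zero.2 hq'
        · intro y (hy : q < y)
          simp only [Function.mem_support]
          have h1 : min y q = q := min_eq_right hy.le
          have h2 : q < min y (q + δ) := lt_min hy (by linarith)
          intro hc
          rw [h1] at hc
          exact absurd (sub_eq_zero.1 hc) (ne_of_gt h2)
      have := integral_sub (int_min hint (q + δ)) (int_min hint q)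
      rw [this] at hsub
      have : Fz ζ q < Fz ζ (q + δ) := by
        rw [Fz, Fz]; linarith
      exact lt_of_le_of_lt hqF this
  -- strict decrease below q
  have hdown : ∀ c : ℝ, 0 ≤ c → c < q → Fz ζ c < x := by
    intro c hc0 hcq
    by_contra hcon
    push_neg at hcon
    have : q ≤ c := hqS ▸ csInf_le hSbdd ⟨hc0, hcon⟩
    linarith
  -- main convergence
  rw [Metric.tendsto_atTop]
  intro ε hε
  -- events
  have E1 : ∀ᶠ n in atTop, xn n < ∫ y, y ∂(ζn n) :=
    hxconv.eventually_lt hmom hxlt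
  have E2 : ∀ᶠ n in atTop, xn n < Fz (ζn n) (q + ε / 2) :=
    hxconv.eventually_lt (hFzconv (q + ε / 2) (by linarith)) (hup (ε / 2) (by linarith))
  have E3 : ∀ᶠ n in atTop, Fz (ζn n) (q - min ε q / 2) < xn n ∨ q = 0 := by
    rcases eq_or_lt_of_le hq0 with h0 | h0
    · exact Eventually.of_forall fun n => Or.inr h0.symm
    · have hc0 : 0 ≤ q - min ε q / 2 := by
        have : min ε q ≤ q := min_le_right _ _
        linarith
      have hcq : q - min ε q / 2 < q := by
        have : 0 < min ε q := lt_min hε h0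
        linarith
      have := (hFzconv _ hc0).eventually_lt hxconv (hdown _ hc0 hcq)
      exact this.mono fun n h => Or.inl h
  rcases ((E1.and E2).and E3).exists_forall_of_atTop with ⟨N, hN⟩
  refine ⟨N, fun n hn => ?_⟩
  obtain ⟨⟨h1, h2⟩, h3⟩ := hN n hn
  haveI := hfin n
  set Sn : Set ℝ := {z : ℝ | 0 ≤ z ∧ xn n ≤ Fz (ζn n) z} with hSn
  have hqn : Finv (ζn n) (xn n) = sInf Sn := by rw [Finv, if_pos h1]
  have hSnne : Sn.Nonempty := by
    have := (Fz_tendsto_atTop (haen n) (hintn n)).eventually (eventually_ge_nhds h1)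
    rcases ((eventually_ge_atTop (0:ℝ)).and this).exists with ⟨z, hz0, hzx⟩
    exact ⟨z, hz0, hzx⟩
  have hSnbdd : BddBelow Sn := ⟨0, fun z hz => hz.1⟩
  -- upper bound
  have hub : sInf Sn ≤ q + ε / 2 :=
    csInf_le hSnbdd ⟨by linarith, h2.le⟩
  -- lower bound
  have hlb : q - ε / 2 ≤ sInf Sn := by
    rcases h3 with h3 | h3
    · have hc0 : 0 ≤ q - min ε q / 2 := by
        have : min ε q ≤ q := min_le_right _ _
        linarith
      have : q - min ε q / 2 ≤ sInf Sn := by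
        refine le_csInf hSnne fun z hz => ?_
        by_contra hcon
        push_neg at hcon
        have := Fz_mono (hintn n) hcon.le
        have := hz.2
        linarith
      have hm : min ε q ≤ ε := min_le_left _ _
      linarith
    · have : 0 ≤ sInf Sn := le_csInf hSnne fun z hz => hz.1
      rw [h3]; linarith
  rw [hqn, Real.dist_eq, abs_sub_lt_iff]
  constructor <;> linarith
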